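/- arXiv:math/0212095 — 4 statements merged into one kernel-verified Lean document; each statement's English description precedes it below -/
import Mathlib

section
/- For a group G, let fold : G * G → G be the homomorphism from the free product induced by the identity on each factor, and let K = ker(G * G → G × G) be the kernel of the canonical map from the free product to the direct product. Then the image of K under fold is exactly the commutator subgroup [G, G]. -/
open Monoid

/-- The fold map `G ∗ G →* G` induced by the identity on each free factor. -/
noncomputable def foldHom (G : Type*) [Group G] : Coprod G G →* G :=
  Coprod.lift (MonoidHom.id G) (MonoidHom.id G)

/-- The canonical map `G ∗ G →* G × G` from the free product to the direct product. -/
noncomputable def toProdHom (G : Type*) [Group G] : Coprod G G →* G × G :=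
  Coprod.lift (MonoidHom.inl G G) (MonoidHom.inr G G)

lemma abel_eq (G : Type*) [Group G] (w : Coprod G G) :
    Abelianization.of (foldHom G w)
      = Abelianization.of ((toProdHom G w).1) * Abelianization.of ((toProdHom G w).2) := by
  have h : (Abelianization.of.comp (foldHom G))
      = (Abelianization.of.comp (MonoidHom.fst G G) * Abelianization.of.comp (MonoidHom.snd G G)).comp (toProdHom G) := by
    apply Coprod.hom_ext <;> ext x <;>
      simp [foldHom, toProdHom]
  exact DFunLike.congr_fun h w

/-- The image under the fold map of the kernel of
`G ∗ G → G × G` is exactly the commutator subgroup `[G,G]`. -/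
theorem stmt1 (G : Type*) [Group G] :
    Subgroup.map (foldHom G) (toProdHom G).ker = commutator G := by
  apply le_antisymm
  · rintro x ⟨w, hw, rfl⟩
    have hk : toProdHom G w = 1 := hw
    have := abel_eq G w
    rw [hk] at this
    simp only [Prod.fst_one, Prod.snd_one, map_one, mul_one] at this
    rwa [← QuotientGroup.eq_one_iff (foldHom G w)]
  · rw [commutator_eq_closure, Subgroup.closure_le]
    rintro x ⟨a, b, rfl⟩
    refine ⟨@Bracket.bracket _ _ commutatorElement (Coprod.inl a : Coprod G G) (Coprod.inr b), ?_, ?_⟩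
    · show toProdHom G _ = 1
      simp only [toProdHom, commutatorElement_def, map_mul, map_inv,
        Coprod.lift_apply_inl, Coprod.lift_apply_inr, MonoidHom.inl_apply, MonoidHom.inr_apply,
        Prod.mk_mul_mk, Prod.inv_mk, Prod.mk_eq_one, one_mul, mul_one]
      constructor <;> group
    · simp only [foldHom, commutatorElement_def, map_mul, map_inv, Coprod.lift_apply_inl,
        Coprod.lift_apply_inr, MonoidHom.id_apply]
end

section
/- Let F be a functor from pointed types to groups with cross effects defined as intersections of kernels of collapse maps. For pointed types X₁,...,X_{n+1}, the group cr_{n+1}F(X₁,...,X_{n+1}) is a retract of ⊥_{n+1}F(X₁ ∨ ⋯ ∨ X_{n+1}) := cr_{n+1}F(W,...,W) where W = X₁ ∨ ⋯ ∨ X_{n+1}: there exist group homomorphisms i : cr_{n+1}F(X₁,...,X_{n+1}) → ⊥_{n+1}F(W) and r : ⊥_{n+1}F(W) → cr_{n+1}F(X₁,...,X_{n+1}) with r ∘ i = id. In particular, if ⊥_{n+1}F(W) is trivial then cr_{n+1}F(X₁,...,X_{n+1}) is trivial. -/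
open CategoryTheory

universe u

/-- The wedge `⋁ᵢ Xᵢ` of a family of pointed types, modeled as the subset of the
product consisting of tuples with at most one non-basepoint coordinate. -/
def Wedge {I : Type} (X : I → Pointed.{u}) : Pointed.{u} where
  X := {p : ∀ i, (X i).X // ∀ i j, p i ≠ (X i).point → p j ≠ (X j).point → i = j}
  point := ⟨fun i => (X i).point, fun i _ hi _ => absurd rfl hi⟩

/-- The collapse map `⋁ᵢ Xᵢ → ⋁_{i ∈ S} Xᵢ` killing the summands outside `S`. -/
def wedgeProj {I : Type} (X : I → Pointed.{u}) (S : Set I) :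
    Wedge X ⟶ Wedge (fun i : S => X i) where
  toFun p := ⟨fun i => p.1 i, fun i j hi hj => Subtype.ext (p.2 i j hi hj)⟩
  map_point := rfl

/-- The map of wedges induced by a family of pointed maps. -/
def wedgeMap {I : Type} {X Y : I → Pointed.{u}} (f : ∀ i, X i ⟶ Y i) :
    Wedge X ⟶ Wedge Y where
  toFun p := ⟨fun i => (f i).toFun (p.1 i), fun i j hi hj =>
    p.2 i j (fun h => hi (by show (f i).toFun (p.1 i) = _; rw [h, (f i).map_point]))
      (fun h => hj (by show (f j).toFun (p.1 j) = _; rw [h, (f j).map_point]))⟩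
  map_point := by
    apply Subtype.ext
    funext i
    exact (f i).map_point

/-- The `I`-th cross effect of `F : Pointed ⥤ Grp` at the family `X`, as a subgroup
of `F(⋁ᵢ Xᵢ)`: the intersection of the kernels of the maps induced by collapsing
each wedge summand. -/
def crEff {I : Type} (F : Pointed.{u} ⥤ GrpCat.{u}) (X : I → Pointed.{u}) :
    Subgroup (F.obj (Wedge X)) :=
  ⨅ j : I, MonoidHom.ker (F.map (wedgeProj X {i | i ≠ j})).hom

/-- The inclusion of the `j`-th summand `X j → ⋁ᵢ Xᵢ`. -/
def wedgeIncl {I : Type} [DecidableEq I] (X : I → Pointed.{u}) (j : I) :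
    X j ⟶ Wedge X where
  toFun x := ⟨fun i => if h : i = j then cast (congrArg (fun k => (X k).X) h).symm x
      else (X i).point,
    fun i i' hi hi' => by
      by_cases h : i = j
      · by_cases h' : i' = j
        · exact h.trans h'.symm
        · exact absurd (dif_neg h') hi'
      · exact absurd (dif_neg h) hi⟩
  map_point := by
    apply Subtype.ext
    funext i
    by_cases h : i = j
    · subst h; simp; rfl
    · simp [h]; rfl

/-- The collapse `⋁ᵢ Xᵢ → X j` of all summands except the `j`-th. -/
def wedgeCollapse {I : Type} (X : I → Pointed.{u}) (j : I) :
    Wedge X ⟶ X j where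
  toFun p := p.1 j
  map_point := rfl

section Aux
universe v
variable {I : Type} (F : Pointed.{u} ⥤ GrpCat.{u}) (X : I → Pointed.{u}) [DecidableEq I]

lemma comm1 (j : I) :
    wedgeMap (fun j => wedgeIncl X j) ≫ wedgeProj (fun _ : I => Wedge X) {i | i ≠ j} =
      wedgeProj X {i | i ≠ j} ≫ wedgeMap (fun i : {i | i ≠ j} => wedgeIncl X i) := rfl

lemma comm2 (j : I) :
    wedgeMap (fun j => wedgeCollapse X j) ≫ wedgeProj X {i | i ≠ j} =
      wedgeProj (fun _ : I => Wedge X) {i | i ≠ j} ≫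
        wedgeMap (fun i : {i | i ≠ j} => wedgeCollapse X i) := rfl

lemma comp_id :
    wedgeMap (fun j => wedgeIncl X j) ≫ wedgeMap (fun j => wedgeCollapse X j) =
      𝟙 (Wedge X) := by
  apply Pointed.Hom.ext
  funext p
  apply Subtype.ext
  funext j
  show ((wedgeIncl X j).toFun (p.1 j)).1 j = p.1 j
  simp [wedgeIncl]

end Aux

lemma mem_crEff {I : Type} (F : Pointed.{u} ⥤ GrpCat.{u}) (X : I → Pointed.{u})
    (g : F.obj (Wedge X)) :
    g ∈ crEff F X ↔ ∀ j : I, F.map (wedgeProj X {i | i ≠ j}) g = 1 := by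
  simp [crEff, Subgroup.mem_iInf, MonoidHom.mem_ker]


/-- `cr_{n+1}F(X₁,…,X_{n+1})` is a retract of
`⊥_{n+1}F(W) = cr_{n+1}F(W,…,W)` where `W = X₁ ∨ ⋯ ∨ X_{n+1}`: there are group
homomorphisms `i` and `r`, induced respectively by the wedge inclusions `Xⱼ → W`
and the collapses `W → Xⱼ` in each variable, with `r ∘ i = id`.  In particular,
if `⊥_{n+1}F(W)` is trivial then so is `cr_{n+1}F(X₁,…,X_{n+1})`. -/
theorem stmt7 (n : ℕ) (F : Pointed.{u} ⥤ GrpCat.{u}) (X : Fin (n + 1) → Pointed.{u}) :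
    ∃ (i : crEff F X →* crEff F (fun _ : Fin (n + 1) => Wedge X))
      (r : crEff F (fun _ : Fin (n + 1) => Wedge X) →* crEff F X),
      (∀ g : crEff F X,
        ((i g : F.obj (Wedge (fun _ : Fin (n + 1) => Wedge X))) =
          F.map (wedgeMap (fun j => wedgeIncl X j)) (g : F.obj (Wedge X)))) ∧
      (∀ g : crEff F (fun _ : Fin (n + 1) => Wedge X),
        ((r g : F.obj (Wedge X)) =
          F.map (wedgeMap (fun j => wedgeCollapse X j))
            (g : F.obj (Wedge (fun _ : Fin (n + 1) => Wedge X))))) ∧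
      r.comp i = MonoidHom.id _ ∧
      (crEff F (fun _ : Fin (n + 1) => Wedge X) = ⊥ → crEff F X = ⊥) := by
  have hi : ∀ g : F.obj (Wedge X), g ∈ crEff F X →
      F.map (wedgeMap (fun j => wedgeIncl X j)) g ∈
        crEff F (fun _ : Fin (n + 1) => Wedge X) := by
    intro g hg
    rw [mem_crEff] at hg ⊢
    intro j
    have key : F.map (wedgeProj (fun _ : Fin (n + 1) => Wedge X) {i | i ≠ j})
        (F.map (wedgeMap (fun j => wedgeIncl X j)) g)
        = F.map (wedgeMap (fun i : {i | i ≠ j} => wedgeIncl X i))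
            (F.map (wedgeProj X {i | i ≠ j}) g) := by
      have := congrArg (fun φ => F.map φ g) (comm1 X j)
      simpa only [F.map_comp, GrpCat.comp_apply] using this
    rw [key, hg j, map_one]
  have hr : ∀ g : F.obj (Wedge (fun _ : Fin (n + 1) => Wedge X)),
      g ∈ crEff F (fun _ : Fin (n + 1) => Wedge X) →
      F.map (wedgeMap (fun j => wedgeCollapse X j)) g ∈ crEff F X := by
    intro g hg
    rw [mem_crEff] at hg ⊢
    intro j
    have key : F.map (wedgeProj X {i | i ≠ j})
        (F.map (wedgeMap (fun j => wedgeCollapse X j)) g)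
        = F.map (wedgeMap (fun i : {i | i ≠ j} => wedgeCollapse X i))
            (F.map (wedgeProj (fun _ : Fin (n + 1) => Wedge X) {i | i ≠ j}) g) := by
      have := congrArg (fun φ => F.map φ g) (comm2 X j)
      simpa only [F.map_comp, GrpCat.comp_apply] using this
    rw [key, hg j, map_one]
  refine ⟨((F.map (wedgeMap (fun j => wedgeIncl X j))).hom.comp
      (crEff F X).subtype).codRestrict _ (fun g => hi g.1 g.2),
    ((F.map (wedgeMap (fun j => wedgeCollapse X j))).hom.comp
      (crEff F (fun _ : Fin (n + 1) => Wedge X)).subtype).codRestrict _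
      (fun g => hr g.1 g.2), fun g => rfl, fun g => rfl, ?_, ?_⟩
  · have key : ∀ g : F.obj (Wedge X),
        F.map (wedgeMap (fun j => wedgeCollapse X j))
          (F.map (wedgeMap (fun j => wedgeIncl X j)) g) = g := by
      intro g
      have := congrArg (fun φ => F.map φ g) (comp_id X)
      simpa only [F.map_comp, F.map_id, GrpCat.comp_apply, GrpCat.id_apply] using this
    ext g
    exact key g.1
  · intro h
    rw [eq_bot_iff]
    intro g hg
    have h1 : F.map (wedgeMap (fun j => wedgeIncl X j)) g ∈
        crEff F (fun _ : Fin (n + 1) => Wedge X) := hi g hg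
    rw [h, Subgroup.mem_bot] at h1
    rw [Subgroup.mem_bot]
    have h2 : F.map (wedgeMap (fun j => wedgeCollapse X j))
        (F.map (wedgeMap (fun j => wedgeIncl X j)) g) = g := by
      have := congrArg (fun φ => F.map φ g) (comp_id X)
      simpa only [F.map_comp, F.map_id, GrpCat.comp_apply, GrpCat.id_apply] using this
    rw [h1, map_one] at h2
    exact h2.symm
end

section
/- Let H be a symmetric multiadditive functor of n variables from abelian groups to abelian groups, with symmetric structure maps σ_* : H(X₁,...,Xₙ) → H(X_{σ⁻¹(1)},...,X_{σ⁻¹(n)}) for σ ∈ Σₙ satisfying (στ)_* = σ_* τ_*. Fix an abelian group X and set all variables equal to X; write H[σ] = H(X,...,X) regarded as the value at the σ-permuted tuple, and let r_σ : H[σ⁻¹] → H[1] be the relabeling isomorphism. Define ⊥ₙH(X) as the joint kernel of the collapse maps from H(⊕ⁿX,...,⊕ⁿX), which by multiadditivity is isomorphic to ∏_{σ ∈ Σₙ} H[σ]. Then the map Σₙ⁺-indexed sum ⊕_{σ∈Σₙ} H[1] → ∏_{σ∈Σₙ} H[σ], sending the σ-summand by the relabeling isomorphism r_σ, is an isomorphism,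 and under this identification the counit ε : ⊥ₙH(X) → H(X) induced by the fold map ⊕ⁿX → X corresponds to the map ⊕_{σ∈Σₙ} H[1] → H[1] that is the identity on each summand. -/
open CategoryTheory

/-- Update the `i`-th entry of a family of abelian groups. -/
def upd {n : ℕ} (X : Fin n → AddCommGrpCat.{0}) (i : Fin n) (A : AddCommGrpCat.{0}) :
    Fin n → AddCommGrpCat.{0} :=
  fun j => if j = i then A else X j

/-- The morphism of families projecting `A × B` onto `A` in the `i`-th slot. -/
def updProj₁ {n : ℕ} (X : Fin n → AddCommGrpCat.{0}) (i : Fin n) (A B : AddCommGrpCat.{0}) :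
    upd X i (AddCommGrpCat.of (A × B)) ⟶ upd X i A :=
  fun j =>
    if h : j = i then
      eqToHom (by simp [upd, h]) ≫ AddCommGrpCat.ofHom (AddMonoidHom.fst A B) ≫
        eqToHom (by simp only [upd, if_pos h])
    else eqToHom (by simp [upd, h])

/-- The morphism of families projecting `A × B` onto `B` in the `i`-th slot. -/
def updProj₂ {n : ℕ} (X : Fin n → AddCommGrpCat.{0}) (i : Fin n) (A B : AddCommGrpCat.{0}) :
    upd X i (AddCommGrpCat.of (A × B)) ⟶ upd X i B :=
  fun j =>
    if h : j = i then
      eqToHom (by simp [upd, h]) ≫ AddCommGrpCat.ofHom (AddMonoidHom.snd A B) ≫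
        eqToHom (by simp only [upd, if_pos h])
    else eqToHom (by simp [upd, h])

/-- The morphism of families from the constant family at `⊕ᵢXᵢ` to `X ∘ f`, whose
`j`-th component is the projection onto the `f j`-th coordinate. -/
def projMor {n : ℕ} (X : Fin n → AddCommGrpCat.{0}) (f : Fin n → Fin n) :
    (fun _ : Fin n => AddCommGrpCat.of (∀ i, X i)) ⟶ (X ∘ f) :=
  fun j => AddCommGrpCat.ofHom (Pi.evalAddMonoidHom (fun i => X i) (f j))

/-- The reindexing functor `A ↦ A ∘ σ` on families of abelian groups. -/
def reindexF {n : ℕ} (σ : Equiv.Perm (Fin n)) :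
    (∀ _ : Fin n, AddCommGrpCat.{0}) ⥤ (∀ _ : Fin n, AddCommGrpCat.{0}) where
  obj A := fun i => A (σ i)
  map f := fun i => f (σ i)

/-- The morphism of families placing `X` in the `σ j`-th summand of `⊕ⁿX` in the
`j`-th variable (the "inclusion indexed by the permutation `σ`"). -/
def inclMor {n : ℕ} (X : AddCommGrpCat.{0}) (σ : Equiv.Perm (Fin n)) :
    (fun _ : Fin n => X) ⟶ (fun _ : Fin n => AddCommGrpCat.of (∀ _ : Fin n, X)) :=
  fun j => AddCommGrpCat.ofHom (AddMonoidHom.single (fun _ : Fin n => X) (σ j))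

/-- The morphism of families collapsing the `j`-th summand of `⊕ⁿX`
(simultaneously in every variable). -/
def collapseMor {n : ℕ} (X : AddCommGrpCat.{0}) (j : Fin n) :
    (fun _ : Fin n => AddCommGrpCat.of (∀ _ : Fin n, X)) ⟶
      (fun _ : Fin n => AddCommGrpCat.of (∀ _ : {i : Fin n // i ≠ j}, X)) :=
  fun _ => AddCommGrpCat.ofHom
    (AddMonoidHom.mk' (fun v i => v i.1) (fun _ _ => rfl))

/-- The fold morphism of families `⊕ⁿX → X` (diagonally in all variables). -/
noncomputable def foldMor {n : ℕ} (X : AddCommGrpCat.{0}) :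
    (fun _ : Fin n => AddCommGrpCat.of (∀ _ : Fin n, X)) ⟶ (fun _ : Fin n => X) :=
  fun _ => AddCommGrpCat.ofHom
    (AddMonoidHom.mk' (fun v => ∑ i, v i) (fun a b => by
      simp [Finset.sum_add_distrib]))

/-- `⊥ₙH(X)`: the joint kernel of the collapse maps out of `H(⊕ⁿX,…,⊕ⁿX)`. -/
noncomputable def perpN {n : ℕ} (H : (∀ _ : Fin n, AddCommGrpCat.{0}) ⥤ AddCommGrpCat.{0})
    (X : AddCommGrpCat.{0}) :
    AddSubgroup (H.obj (fun _ : Fin n => AddCommGrpCat.of (∀ _ : Fin n, X))) :=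
  ⨅ j : Fin n, (H.map (collapseMor X j)).hom.ker
namespace Stmt12Aux

open CategoryTheory

variable {n : ℕ}

/-- Applying the functor to a composite, elementwise. -/
lemma mapc (H : (∀ _ : Fin n, AddCommGrpCat.{0}) ⥤ AddCommGrpCat.{0})
    {Y Z W : Fin n → AddCommGrpCat.{0}} (f : Y ⟶ Z) (g : Z ⟶ W) (x : H.obj Y) :
    H.map (f ≫ g) x = H.map g (H.map f x) := by
  rw [H.map_comp]; rfl

section LemA

variable (H : (∀ _ : Fin n, AddCommGrpCat.{0}) ⥤ AddCommGrpCat.{0})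
variable {Y Z : Fin n → AddCommGrpCat.{0}}

/-- first factor through the slot with `PUnit.{1}` -/
def zfac1 (f : Y ⟶ Z) (k : Fin n) : Y ⟶ upd Z k (AddCommGrpCat.of PUnit.{1}) :=
  fun j => if hj : j = k then 0 else f j ≫ eqToHom (by simp [upd, hj])

def zfac2 (Z : Fin n → AddCommGrpCat.{0}) (k : Fin n) : upd Z k (AddCommGrpCat.of PUnit.{1}) ⟶ Z :=
  fun j => if hj : j = k then 0 else eqToHom (by simp [upd, hj])

lemma zfac_comp (f : Y ⟶ Z) (k : Fin n) (hk : f k = 0) :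
    zfac1 f k ≫ zfac2 Z k = f := by
  funext j
  show zfac1 f k j ≫ zfac2 Z k j = f j
  by_cases hj : j = k
  · subst hj
    simp [zfac1, zfac2, hk]
  · simp [zfac1, zfac2, hj]

/-- Lemma A: if one slot of a morphism of families is zero, the functor kills it. -/
lemma lemA
    (hadd : ∀ (X : Fin n → AddCommGrpCat.{0}) (i : Fin n) (A B : AddCommGrpCat.{0}),
      Function.Bijective (fun x : H.obj (upd X i (AddCommGrpCat.of (A × B))) =>
        (H.map (updProj₁ X i A B) x, H.map (updProj₂ X i A B) x)))
    (f : Y ⟶ Z) (k : Fin n) (hk : f k = 0) (x : H.obj Y) :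
    H.map f x = 0 := by
  have hpq : updProj₁ Z k (AddCommGrpCat.of PUnit.{1}) (AddCommGrpCat.of PUnit.{1})
      = updProj₂ Z k (AddCommGrpCat.of PUnit.{1}) (AddCommGrpCat.of PUnit.{1}) := by
    have h0 : AddCommGrpCat.ofHom (AddMonoidHom.fst (AddCommGrpCat.of PUnit.{1}) (AddCommGrpCat.of PUnit.{1}))
        = AddCommGrpCat.ofHom (AddMonoidHom.snd (AddCommGrpCat.of PUnit.{1}) (AddCommGrpCat.of PUnit.{1})) := by
      ext v
    funext j
    unfold updProj₁ updProj₂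
    simp only [h0]
  have hsub : ∀ a b : H.obj (upd Z k (AddCommGrpCat.of PUnit.{1})), a = b := by
    intro a b
    obtain ⟨w, hw⟩ :=
      (hadd Z k (AddCommGrpCat.of PUnit.{1}) (AddCommGrpCat.of PUnit.{1})).2 (a, b)
    have h1 := congrArg Prod.fst hw
    have h2 := congrArg Prod.snd hw
    simp only at h1 h2
    rw [← h1, ← h2, hpq]
  rw [← zfac_comp f k hk, mapc]
  rw [hsub (H.map (zfac1 f k) x) 0]
  exact map_zero _

end LemA

section LemB

variable (H : (∀ _ : Fin n, AddCommGrpCat.{0}) ⥤ AddCommGrpCat.{0})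
variable {G₁ G₂ : AddCommGrpCat.{0}}

/-- The family with `G₂ × G₂` in slot `k` and `G₂` elsewhere. -/
abbrev WW (G₂ : AddCommGrpCat.{0}) (k : Fin n) : Fin n → AddCommGrpCat.{0} :=
  upd (fun _ : Fin n => G₂) k (AddCommGrpCat.of (G₂ × G₂))

def toZ (G₂ : AddCommGrpCat.{0}) (k : Fin n) :
    upd (fun _ : Fin n => G₂) k G₂ ⟶ (fun _ : Fin n => G₂) :=
  fun j => eqToHom (by by_cases hj : j = k <;> simp [upd, hj])

def qq₁ (G₂ : AddCommGrpCat.{0}) (k : Fin n) : WW G₂ k ⟶ (fun _ : Fin n => G₂) :=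
  updProj₁ (fun _ : Fin n => G₂) k G₂ G₂ ≫ toZ G₂ k

def qq₂ (G₂ : AddCommGrpCat.{0}) (k : Fin n) : WW G₂ k ⟶ (fun _ : Fin n => G₂) :=
  updProj₂ (fun _ : Fin n => G₂) k G₂ G₂ ≫ toZ G₂ k

def ii₁ (G₂ : AddCommGrpCat.{0}) (k : Fin n) : (fun _ : Fin n => G₂) ⟶ WW G₂ k :=
  fun j => if hj : j = k then
    AddCommGrpCat.ofHom (AddMonoidHom.inl G₂ G₂) ≫ eqToHom (by simp [WW, upd, hj])
  else eqToHom (by simp [WW, upd, hj])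

def ii₂ (G₂ : AddCommGrpCat.{0}) (k : Fin n) : (fun _ : Fin n => G₂) ⟶ WW G₂ k :=
  fun j => if hj : j = k then
    AddCommGrpCat.ofHom (AddMonoidHom.inr G₂ G₂) ≫ eqToHom (by simp [WW, upd, hj])
  else eqToHom (by simp [WW, upd, hj])

def ssum (G₂ : AddCommGrpCat.{0}) (k : Fin n) : WW G₂ k ⟶ (fun _ : Fin n => G₂) :=
  fun j => if hj : j = k then
    eqToHom (by simp [WW, upd, hj]) ≫
      AddCommGrpCat.ofHom (AddMonoidHom.fst G₂ G₂ + AddMonoidHom.snd G₂ G₂)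
  else eqToHom (by simp [WW, upd, hj])

def pairW (k : Fin n) (g e : (fun _ : Fin n => G₁) ⟶ (fun _ : Fin n => G₂)) :
    (fun _ : Fin n => G₁) ⟶ WW G₂ k :=
  fun j => if hj : j = k then
    AddCommGrpCat.ofHom (AddMonoidHom.prod (g k).hom (e k).hom) ≫ eqToHom (by simp [WW, upd, hj])
  else g j ≫ eqToHom (by simp [WW, upd, hj])

lemma pair_q₁ (k : Fin n) (g e : (fun _ : Fin n => G₁) ⟶ (fun _ : Fin n => G₂)) :
    pairW k g e ≫ qq₁ G₂ k = g := by
  funext j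
  show pairW k g e j ≫ (updProj₁ (fun _ : Fin n => G₂) k G₂ G₂ j ≫ toZ G₂ k j) = g j
  by_cases hj : j = k
  · subst hj
    simp [pairW, updProj₁, toZ]
    ext v
    rfl
  · simp [pairW, updProj₁, toZ, hj]

lemma pair_q₂ (k : Fin n) (g e : (fun _ : Fin n => G₁) ⟶ (fun _ : Fin n => G₂))
    (hge : ∀ j, j ≠ k → g j = e j) :
    pairW k g e ≫ qq₂ G₂ k = e := by
  funext j
  show pairW k g e j ≫ (updProj₂ (fun _ : Fin n => G₂) k G₂ G₂ j ≫ toZ G₂ k j) = e j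
  by_cases hj : j = k
  · subst hj
    simp [pairW, updProj₂, toZ]
    ext v
    rfl
  · simp [pairW, updProj₂, toZ, hj]
    exact hge j hj

lemma i₁_q₁ (k : Fin n) : ii₁ G₂ k ≫ qq₁ G₂ k = 𝟙 (fun _ : Fin n => G₂) := by
  funext j
  show ii₁ G₂ k j ≫ (updProj₁ (fun _ : Fin n => G₂) k G₂ G₂ j ≫ toZ G₂ k j) = 𝟙 G₂
  by_cases hj : j = k
  · subst hj
    simp [ii₁, updProj₁, toZ]
    ext v
    rfl
  · simp [ii₁, updProj₁, toZ, hj]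

lemma i₂_q₂ (k : Fin n) : ii₂ G₂ k ≫ qq₂ G₂ k = 𝟙 (fun _ : Fin n => G₂) := by
  funext j
  show ii₂ G₂ k j ≫ (updProj₂ (fun _ : Fin n => G₂) k G₂ G₂ j ≫ toZ G₂ k j) = 𝟙 G₂
  by_cases hj : j = k
  · subst hj
    simp [ii₂, updProj₂, toZ]
    ext v
    rfl
  · simp [ii₂, updProj₂, toZ, hj]

lemma i₂_q₁ (k : Fin n) : (ii₂ G₂ k ≫ qq₁ G₂ k) k = 0 := by
  show ii₂ G₂ k k ≫ (updProj₁ (fun _ : Fin n => G₂) k G₂ G₂ k ≫ toZ G₂ k k) = 0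
  simp [ii₂, updProj₁, toZ]
  ext v
  rfl

lemma i₁_q₂ (k : Fin n) : (ii₁ G₂ k ≫ qq₂ G₂ k) k = 0 := by
  show ii₁ G₂ k k ≫ (updProj₂ (fun _ : Fin n => G₂) k G₂ G₂ k ≫ toZ G₂ k k) = 0
  simp [ii₁, updProj₂, toZ]
  ext v
  rfl

lemma i₁_s (k : Fin n) : ii₁ G₂ k ≫ ssum G₂ k = 𝟙 (fun _ : Fin n => G₂) := by
  funext j
  show ii₁ G₂ k j ≫ ssum G₂ k j = 𝟙 G₂
  by_cases hj : j = k
  · subst hj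
    simp [ii₁, ssum]
    ext v
    show AddMonoidHom.fst _ _ (v, 0) + AddMonoidHom.snd _ _ (v, 0) = v
    simp

  · simp [ii₁, ssum, hj]

lemma i₂_s (k : Fin n) : ii₂ G₂ k ≫ ssum G₂ k = 𝟙 (fun _ : Fin n => G₂) := by
  funext j
  show ii₂ G₂ k j ≫ ssum G₂ k j = 𝟙 G₂
  by_cases hj : j = k
  · subst hj
    simp [ii₂, ssum]
    ext v
    show AddMonoidHom.fst _ _ ((0 : G₂), v) + AddMonoidHom.snd _ _ ((0 : G₂), v) = v
    simp
  · simp [ii₂, ssum, hj]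

lemma pair_s (k : Fin n) (f g e : (fun _ : Fin n => G₁) ⟶ (fun _ : Fin n => G₂))
    (hfg : ∀ j, j ≠ k → f j = g j) (hk : f k = g k + e k) :
    pairW k g e ≫ ssum G₂ k = f := by
  funext j
  show pairW k g e j ≫ ssum G₂ k j = f j
  by_cases hj : j = k
  · subst hj
    simp [pairW, ssum, hk]
    ext v
    show AddMonoidHom.fst _ _ (g j v, e j v) + AddMonoidHom.snd _ _ (g j v, e j v) = g j v + e j v
    rfl
  · simp [pairW, ssum, hj]
    exact (hfg j hj).symm

lemma toZ_inj (H : (∀ _ : Fin n, AddCommGrpCat.{0}) ⥤ AddCommGrpCat.{0}) (G₂ : AddCommGrpCat.{0})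
    (k : Fin n) : Function.Injective (H.map (toZ G₂ k)) := by
  have : IsIso (toZ G₂ k) := by
    refine ⟨fun j => eqToHom (by by_cases hj : j = k <;> simp [upd, hj]), ?_, ?_⟩
    · funext j; show toZ G₂ k j ≫ _ = 𝟙 _; simp [toZ]
    · funext j; show _ ≫ toZ G₂ k j = 𝟙 _; simp [toZ]
  have : IsIso (H.map (toZ G₂ k)) := inferInstance
  exact (CategoryTheory.ConcreteCategory.bijective_of_isIso (H.map (toZ G₂ k))).1

variable (H : (∀ _ : Fin n, AddCommGrpCat.{0}) ⥤ AddCommGrpCat.{0})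

lemma decompW
    (hadd : ∀ (X : Fin n → AddCommGrpCat.{0}) (i : Fin n) (A B : AddCommGrpCat.{0}),
      Function.Bijective (fun x : H.obj (upd X i (AddCommGrpCat.of (A × B))) =>
        (H.map (updProj₁ X i A B) x, H.map (updProj₂ X i A B) x)))
    (G₂ : AddCommGrpCat.{0}) (k : Fin n) (w : H.obj (WW G₂ k)) :
    w = H.map (ii₁ G₂ k) (H.map (qq₁ G₂ k) w) + H.map (ii₂ G₂ k) (H.map (qq₂ G₂ k) w) := by
  have e11 : ∀ u, H.map (qq₁ G₂ k) (H.map (ii₁ G₂ k) u) = u := by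
    intro u
    rw [← mapc H (ii₁ G₂ k) (qq₁ G₂ k) u, i₁_q₁, H.map_id]
    rfl
  have e21 : ∀ u, H.map (qq₁ G₂ k) (H.map (ii₂ G₂ k) u) = 0 := by
    intro u
    rw [← mapc H (ii₂ G₂ k) (qq₁ G₂ k) u]
    exact lemA H hadd _ k (i₂_q₁ k) u
  have e22 : ∀ u, H.map (qq₂ G₂ k) (H.map (ii₂ G₂ k) u) = u := by
    intro u
    rw [← mapc H (ii₂ G₂ k) (qq₂ G₂ k) u, i₂_q₂, H.map_id]
    rfl
  have e12 : ∀ u, H.map (qq₂ G₂ k) (H.map (ii₁ G₂ k) u) = 0 := by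
    intro u
    rw [← mapc H (ii₁ G₂ k) (qq₂ G₂ k) u]
    exact lemA H hadd _ k (i₁_q₂ k) u
  set rhs := H.map (ii₁ G₂ k) (H.map (qq₁ G₂ k) w) + H.map (ii₂ G₂ k) (H.map (qq₂ G₂ k) w)
    with hrhs
  have hq₁ : H.map (qq₁ G₂ k) rhs = H.map (qq₁ G₂ k) w := by
    rw [hrhs, map_add, e11, e21, add_zero]
  have hq₂ : H.map (qq₂ G₂ k) rhs = H.map (qq₂ G₂ k) w := by
    rw [hrhs, map_add, e22, e12, zero_add]
  have hmq₁ : ∀ x, H.map (qq₁ G₂ k) x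
      = H.map (toZ G₂ k) (H.map (updProj₁ (fun _ : Fin n => G₂) k G₂ G₂) x) :=
    fun x => mapc H (updProj₁ (fun _ : Fin n => G₂) k G₂ G₂) (toZ G₂ k) x
  have hmq₂ : ∀ x, H.map (qq₂ G₂ k) x
      = H.map (toZ G₂ k) (H.map (updProj₂ (fun _ : Fin n => G₂) k G₂ G₂) x) :=
    fun x => mapc H (updProj₂ (fun _ : Fin n => G₂) k G₂ G₂) (toZ G₂ k) x
  have hp₁ : H.map (updProj₁ (fun _ : Fin n => G₂) k G₂ G₂) rhs
      = H.map (updProj₁ (fun _ : Fin n => G₂) k G₂ G₂) w := by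
    apply toZ_inj H G₂ k
    rw [← hmq₁, ← hmq₁]
    exact hq₁
  have hp₂ : H.map (updProj₂ (fun _ : Fin n => G₂) k G₂ G₂) rhs
      = H.map (updProj₂ (fun _ : Fin n => G₂) k G₂ G₂) w := by
    apply toZ_inj H G₂ k
    rw [← hmq₂, ← hmq₂]
    exact hq₂
  exact (hadd (fun _ : Fin n => G₂) k G₂ G₂).1
    (a₁ := w) (a₂ := rhs) (by simp [hp₁, hp₂])

/-- Lemma B: binary additivity in one slot, for constant families. -/
lemma lemB
    (hadd : ∀ (X : Fin n → AddCommGrpCat.{0}) (i : Fin n) (A B : AddCommGrpCat.{0}),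
      Function.Bijective (fun x : H.obj (upd X i (AddCommGrpCat.of (A × B))) =>
        (H.map (updProj₁ X i A B) x, H.map (updProj₂ X i A B) x)))
    (k : Fin n) (f g e : (fun _ : Fin n => G₁) ⟶ (fun _ : Fin n => G₂))
    (hfg : ∀ j, j ≠ k → f j = g j) (hge : ∀ j, j ≠ k → g j = e j)
    (hk : f k = g k + e k) (x : H.obj (fun _ : Fin n => G₁)) :
    H.map f x = H.map g x + H.map e x := by
  have hf : H.map f x = H.map (ssum G₂ k) (H.map (pairW k g e) x) := by
    rw [← mapc H (pairW k g e) (ssum G₂ k) x, pair_s k f g e hfg hk]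
  set w := H.map (pairW k g e) x with hw
  have h1 : ∀ u, H.map (ssum G₂ k) (H.map (ii₁ G₂ k) u) = u := by
    intro u
    rw [← mapc H (ii₁ G₂ k) (ssum G₂ k) u, i₁_s, H.map_id]
    rfl
  have h2 : ∀ u, H.map (ssum G₂ k) (H.map (ii₂ G₂ k) u) = u := by
    intro u
    rw [← mapc H (ii₂ G₂ k) (ssum G₂ k) u, i₂_s, H.map_id]
    rfl
  have hg : H.map (qq₁ G₂ k) w = H.map g x := by
    rw [hw, ← mapc H (pairW k g e) (qq₁ G₂ k) x, pair_q₁]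
  have he : H.map (qq₂ G₂ k) w = H.map e x := by
    rw [hw, ← mapc H (pairW k g e) (qq₂ G₂ k) x, pair_q₂ k g e hge]
  rw [hf, decompW H hadd G₂ k w, map_add, h1, h2, hg, he]
end LemB

section LemC

variable (H : (∀ _ : Fin n, AddCommGrpCat.{0}) ⥤ AddCommGrpCat.{0})
variable {G₁ G₂ : AddCommGrpCat.{0}}

/-- Replace the `k`-th component of a morphism of constant families. -/
def crepl (f : (fun _ : Fin n => G₁) ⟶ (fun _ : Fin n => G₂)) (k : Fin n) (g : G₁ ⟶ G₂) :
    (fun _ : Fin n => G₁) ⟶ (fun _ : Fin n => G₂) :=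
  fun j => if j = k then g else f j

lemma crepl_same (f : (fun _ : Fin n => G₁) ⟶ (fun _ : Fin n => G₂)) (k : Fin n)
    (g g' : G₁ ⟶ G₂) : crepl (crepl f k g') k g = crepl f k g := by
  funext j
  by_cases hj : j = k <;> simp [crepl, hj]

/-- Lemma C: additivity of `H` in one slot, for finite sums. -/
lemma lemC
    (hadd : ∀ (X : Fin n → AddCommGrpCat.{0}) (i : Fin n) (A B : AddCommGrpCat.{0}),
      Function.Bijective (fun x : H.obj (upd X i (AddCommGrpCat.of (A × B))) =>
        (H.map (updProj₁ X i A B) x, H.map (updProj₂ X i A B) x)))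
    (k : Fin n) {ι : Type} [DecidableEq ι] (s : Finset ι) (c : ι → (G₁ ⟶ G₂))
    (f : (fun _ : Fin n => G₁) ⟶ (fun _ : Fin n => G₂))
    (hk : f k = ∑ i ∈ s, c i) (x : H.obj (fun _ : Fin n => G₁)) :
    H.map f x = ∑ i ∈ s, H.map (crepl f k (c i)) x := by
  induction s using Finset.induction_on generalizing f with
  | empty =>
    rw [Finset.sum_empty] at hk ⊢
    exact lemA H hadd f k hk x
  | @insert i s hi ih =>
    have hB := lemB H hadd k f (crepl f k (c i)) (crepl f k (∑ j ∈ s, c j))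
      (fun j hj => (if_neg hj).symm)
      (fun j hj => by simp [crepl, hj])
      (by simp [crepl, hk, Finset.sum_insert hi]) x
    rw [hB, ih (crepl f k (∑ j ∈ s, c j)) (by simp [crepl]), Finset.sum_insert hi]
    congr 1
    exact Finset.sum_congr rfl fun j _ => by rw [crepl_same]

end LemC

section Expand

variable (H : (∀ _ : Fin n, AddCommGrpCat.{0}) ⥤ AddCommGrpCat.{0}) (X : AddCommGrpCat.{0})

/-- The endomorphism of `⊕ⁿX` projecting to the `i`-th summand and including it back. -/
def eMor (i : Fin n) :
    AddCommGrpCat.of (∀ _ : Fin n, X) ⟶ AddCommGrpCat.of (∀ _ : Fin n, X) :=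
  AddCommGrpCat.ofHom (Pi.evalAddMonoidHom (fun _ : Fin n => X) i) ≫
    AddCommGrpCat.ofHom (AddMonoidHom.single (fun _ : Fin n => X) i)

lemma id_eq_sum_eMor :
    (𝟙 (AddCommGrpCat.of (∀ _ : Fin n, X)) : AddCommGrpCat.of (∀ _ : Fin n, X) ⟶ _)
      = ∑ i : Fin n, eMor X i := by
  refine AddCommGrpCat.ext fun v => ?_
  have h1 : (∑ i : Fin n, eMor X i) v = ∑ i : Fin n, eMor X i v :=
    map_sum ((AddMonoidHom.eval v).comp AddCommGrpCat.homAddEquiv.toAddMonoidHom)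
      (fun i : Fin n => eMor X i) Finset.univ
  have h2 : ∀ i : Fin n, eMor X i v = Pi.single i (v i) := fun i => rfl
  simp only [h1, h2]
  exact (Finset.univ_sum_single v).symm

/-- Partial multidiagonal morphisms. -/
def uT (T : Finset (Fin n)) (f : Fin n → Fin n) :
    (fun _ : Fin n => AddCommGrpCat.of (∀ _ : Fin n, X)) ⟶
      (fun _ : Fin n => AddCommGrpCat.of (∀ _ : Fin n, X)) :=
  fun j => if j ∈ T then eMor X (f j) else 𝟙 _

/-- Functions that are the identity off `T`. -/
def SS (T : Finset (Fin n)) : Finset (Fin n → Fin n) :=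
  Finset.univ.filter (fun f => ∀ j, j ∉ T → f j = j)

set_option maxHeartbeats 1000000 in
lemma expand
    (hadd : ∀ (Y : Fin n → AddCommGrpCat.{0}) (i : Fin n) (A B : AddCommGrpCat.{0}),
      Function.Bijective (fun x : H.obj (upd Y i (AddCommGrpCat.of (A × B))) =>
        (H.map (updProj₁ Y i A B) x, H.map (updProj₂ Y i A B) x)))
    (T : Finset (Fin n)) (x : H.obj (fun _ : Fin n => AddCommGrpCat.of (∀ _ : Fin n, X))) :
    x = ∑ f ∈ SS T, H.map (uT X T f) x := by
  induction T using Finset.induction_on with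
  | empty =>
    have hS : SS (n := n) ∅ = {fun j => j} := by
      ext f
      simp [SS, funext_iff]
    have hu : ∀ f, uT X ∅ f = 𝟙 (fun _ : Fin n => AddCommGrpCat.of (∀ _ : Fin n, X)) := by
      intro f
      funext j
      simp [uT]
    rw [hS, Finset.sum_singleton, hu, H.map_id]
    rfl
  | @insert a T ha ih =>
    have step : ∀ f ∈ SS T, H.map (uT X T f) x
        = ∑ i : Fin n, H.map (uT X (insert a T) (Function.update f a i)) x := by
      intro f hf
      have hslot : uT X T f a = ∑ i : Fin n, eMor X i := by
        simp only [uT, if_neg ha]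
        exact id_eq_sum_eMor X
      rw [lemC H hadd a Finset.univ (eMor X) (uT X T f) hslot x]
      refine Finset.sum_congr rfl fun i _ => ?_
      have hcr : crepl (uT X T f) a (eMor X i) = uT X (insert a T) (Function.update f a i) := by
        funext j
        by_cases hj : j = a
        · subst hj
          simp [crepl, uT, Function.update_self]
        · simp [crepl, uT, hj, Function.update_of_ne hj, Finset.mem_insert]
      rw [hcr]
    calc x = ∑ f ∈ SS T, H.map (uT X T f) x := ih
      _ = ∑ f ∈ SS T, ∑ i : Fin n, H.map (uT X (insert a T) (Function.update f a i)) x :=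
          Finset.sum_congr rfl step
      _ = ∑ p ∈ SS T ×ˢ (Finset.univ : Finset (Fin n)),
            H.map (uT X (insert a T) (Function.update p.1 a p.2)) x :=
          (Finset.sum_product (SS T) (Finset.univ : Finset (Fin n))
            (fun p => H.map (uT X (insert a T) (Function.update p.1 a p.2)) x)).symm
      _ = ∑ g ∈ SS (insert a T), H.map (uT X (insert a T) g) x := by
          refine Finset.sum_nbij' (fun p => Function.update p.1 a p.2)
            (fun g => (Function.update g a a, g a)) ?_ ?_ ?_ ?_ ?_
          · rintro ⟨f, i⟩ hp
            simp only [Finset.mem_product, SS, Finset.mem_filter, Finset.mem_univ,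
              true_and] at hp ⊢
            intro j hj
            rw [Finset.mem_insert, not_or] at hj
            rw [Function.update_of_ne hj.1]
            exact hp.1 j hj.2
          · intro g hg
            simp only [SS, Finset.mem_filter, Finset.mem_univ, true_and,
              Finset.mem_product] at hg ⊢
            refine ⟨fun j hj => ?_, trivial⟩
            by_cases hja : j = a
            · subst hja
              rw [Function.update_self]
            · rw [Function.update_of_ne hja]
              exact hg j (by simp [hja, hj])
          · rintro ⟨f, i⟩ hp
            simp only [Finset.mem_product, SS, Finset.mem_filter, Finset.mem_univ,
              true_and] at hp
            have hfa : f a = a := hp.1 a ha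
            ext j
            · by_cases hja : j = a
              · subst hja
                simp [Function.update_self, hfa]
              · simp [Function.update_of_ne hja]
            · simp [Function.update_self]
          · intro g hg
            simp [Function.update_idem, Function.update_eq_self]
          · intro p hp
            rfl

end Expand

section Final

variable (H : (∀ _ : Fin n, AddCommGrpCat.{0}) ⥤ AddCommGrpCat.{0}) (X : AddCommGrpCat.{0})

/-- The projection morphism indexed by a function. -/
def Pc (f : Fin n → Fin n) :
    (fun _ : Fin n => AddCommGrpCat.of (∀ _ : Fin n, X)) ⟶ (fun _ : Fin n => X) :=
  fun j => AddCommGrpCat.ofHom (Pi.evalAddMonoidHom (fun _ : Fin n => X) (f j))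

lemma single_restrict_zero {α : Type} [AddCommGroup α] (k j : Fin n) (hkj : k = j) (v : α)
    (i : {i : Fin n // i ≠ j}) : Pi.single (M := fun _ : Fin n => α) k v i.1 = 0 := by
  subst hkj
  exact Pi.single_eq_of_ne (M := fun _ : Fin n => α) i.2 v

lemma keyProj
    (hadd : ∀ (Y : Fin n → AddCommGrpCat.{0}) (i : Fin n) (A B : AddCommGrpCat.{0}),
      Function.Bijective (fun x : H.obj (upd Y i (AddCommGrpCat.of (A × B))) =>
        (H.map (updProj₁ Y i A B) x, H.map (updProj₂ Y i A B) x)))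
    (a : Equiv.Perm (Fin n) → H.obj (fun _ : Fin n => X)) (τ : Equiv.Perm (Fin n)) :
    H.map (Pc X ⇑τ) (∑ σ : Equiv.Perm (Fin n), H.map (inclMor X σ) (a σ)) = a τ := by
  rw [map_sum]
  have hterm : ∀ σ : Equiv.Perm (Fin n),
      H.map (Pc X ⇑τ) (H.map (inclMor X σ) (a σ)) = if σ = τ then a σ else 0 := by
    intro σ
    rw [← mapc]
    by_cases hστ : σ = τ
    · subst hστ
      have hid : inclMor X σ ≫ Pc X ⇑σ = 𝟙 (fun _ : Fin n => X) := by
        funext j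
        show inclMor X σ j ≫ Pc X ⇑σ j = 𝟙 X
        ext v
        simp [inclMor, Pc]
      rw [hid, H.map_id, if_pos rfl]
      rfl
    · obtain ⟨j, hj⟩ : ∃ j, σ j ≠ τ j := by
        by_contra hc
        push_neg at hc
        exact hστ (Equiv.ext hc)
      have hz : (inclMor X σ ≫ Pc X ⇑τ) j = 0 := by
        show inclMor X σ j ≫ Pc X ⇑τ j = 0
        ext v
        simp [inclMor, Pc, Pi.single_eq_of_ne (Ne.symm hj)]
      rw [if_neg hστ]
      exact lemA H hadd _ j hz _
  rw [Finset.sum_congr rfl fun σ _ => hterm σ]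
  simp

lemma memPerp
    (hadd : ∀ (Y : Fin n → AddCommGrpCat.{0}) (i : Fin n) (A B : AddCommGrpCat.{0}),
      Function.Bijective (fun x : H.obj (upd Y i (AddCommGrpCat.of (A × B))) =>
        (H.map (updProj₁ Y i A B) x, H.map (updProj₂ Y i A B) x)))
    (y : H.obj (fun _ : Fin n => X)) (σ : Equiv.Perm (Fin n)) :
    H.map (inclMor X σ) y ∈ perpN H X := by
  rw [perpN, AddSubgroup.mem_iInf]
  intro j
  rw [AddMonoidHom.mem_ker, ← mapc]
  apply lemA H hadd _ (σ.symm j)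
  show inclMor X σ (σ.symm j) ≫ collapseMor X j (σ.symm j) = 0
  ext v i
  exact single_restrict_zero (σ (σ.symm j)) j (σ.apply_symm_apply j) v i

/-- Factoring the non-surjective terms through the collapse. -/
def Qm (f : Fin n → Fin n) (j : Fin n) (h : ∀ i, f i ≠ j) :
    (fun _ : Fin n => AddCommGrpCat.of (∀ _ : {i : Fin n // i ≠ j}, X)) ⟶
      (fun _ : Fin n => AddCommGrpCat.of (∀ _ : Fin n, X)) :=
  fun k' => AddCommGrpCat.ofHom ((AddMonoidHom.single (fun _ : Fin n => X) (f k')).comp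
    (Pi.evalAddMonoidHom (fun _ : {i : Fin n // i ≠ j} => X) ⟨f k', h k'⟩))

lemma uT_factor (f : Fin n → Fin n) (j : Fin n) (h : ∀ i, f i ≠ j) :
    uT X Finset.univ f = collapseMor X j ≫ Qm X f j h := by
  funext k'
  show uT X Finset.univ f k' = collapseMor X j k' ≫ Qm X f j h k'
  rw [uT, if_pos (Finset.mem_univ k')]
  ext v
  rfl

lemma decompPerp
    (hadd : ∀ (Y : Fin n → AddCommGrpCat.{0}) (i : Fin n) (A B : AddCommGrpCat.{0}),
      Function.Bijective (fun x : H.obj (upd Y i (AddCommGrpCat.of (A × B))) =>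
        (H.map (updProj₁ Y i A B) x, H.map (updProj₂ Y i A B) x)))
    (x : H.obj (fun _ : Fin n => AddCommGrpCat.of (∀ _ : Fin n, X)))
    (hx : x ∈ perpN H X) :
    x = ∑ σ : Equiv.Perm (Fin n), H.map (inclMor X σ) (H.map (Pc X ⇑σ) x) := by
  have h1 := expand H X hadd Finset.univ x
  have hSS : SS (n := n) Finset.univ = Finset.univ := by
    apply Finset.filter_true_of_mem
    intro f _ j hj
    exact absurd (Finset.mem_univ j) hj
  rw [hSS] at h1
  rw [← Finset.sum_filter_add_sum_filter_not Finset.univ Function.Bijective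
    (fun f => H.map (uT X Finset.univ f) x)] at h1
  have hnb : ∑ f ∈ Finset.univ.filter (fun f : Fin n → Fin n => ¬ Function.Bijective f),
      H.map (uT X Finset.univ f) x = 0 := by
    apply Finset.sum_eq_zero
    intro f hf
    rw [Finset.mem_filter] at hf
    have hns : ¬ Function.Surjective f := fun hs => hf.2 (Finite.surjective_iff_bijective.1 hs)
    rw [Function.Surjective] at hns
    push_neg at hns
    obtain ⟨j, hj⟩ := hns
    rw [uT_factor X f j hj, mapc]
    have hx0 : H.map (collapseMor X j) x = 0 := by
      rw [perpN, AddSubgroup.mem_iInf] at hx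
      exact AddMonoidHom.mem_ker.1 (hx j)
    rw [hx0]
    exact map_zero _
  rw [hnb, add_zero] at h1
  have himg : Finset.univ.filter (fun f : Fin n → Fin n => Function.Bijective f)
      = Finset.image (fun σ : Equiv.Perm (Fin n) => ⇑σ) Finset.univ := by
    ext f
    simp only [Finset.mem_filter, Finset.mem_univ, true_and, Finset.mem_image]
    constructor
    · intro hb
      exact ⟨Equiv.ofBijective f hb, rfl⟩
    · rintro ⟨σ, rfl⟩
      exact σ.bijective
  rw [himg, Finset.sum_image (fun σ _ τ _ hh => Equiv.coe_fn_injective hh)] at h1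
  have huT : ∀ σ : Equiv.Perm (Fin n),
      uT X Finset.univ ⇑σ = Pc X ⇑σ ≫ inclMor X σ := by
    intro σ
    funext j
    show (if j ∈ Finset.univ then eMor X (σ j) else _) = _
    rw [if_pos (Finset.mem_univ j)]
    rfl
  calc x = ∑ σ : Equiv.Perm (Fin n), H.map (uT X Finset.univ ⇑σ) x := h1
    _ = ∑ σ : Equiv.Perm (Fin n), H.map (inclMor X σ) (H.map (Pc X ⇑σ) x) := by
        refine Finset.sum_congr rfl fun σ _ => ?_
        rw [huT σ, mapc]

lemma foldIncl (σ : Equiv.Perm (Fin n)) :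
    inclMor X σ ≫ foldMor X = 𝟙 (fun _ : Fin n => X) := by
  funext j
  show inclMor X σ j ≫ foldMor X j = 𝟙 X
  ext v
  simp [inclMor, foldMor, Finset.sum_pi_single']

end Final

end Stmt12Aux
/-- For a symmetric multiadditive functor `H` of `n` variables of
abelian groups, evaluated with all variables equal to `X`: the map
`⊕_{σ ∈ Σₙ} H[1] → ∏_{σ} H[σ] ≅ ⊥ₙH(X)` sending the `σ`-summand by the relabeling
isomorphism (i.e. `a ↦ ∑_σ H(ι_σ)(a σ)`, where `ι_σ` includes `X` as the `σ j`-th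
summand in the `j`-th variable) is injective with image exactly `⊥ₙH(X)`, and under
this identification the counit `ε` (restriction of `H(fold)`) corresponds to the map
that is the identity on each summand, `a ↦ ∑_σ a σ`. -/
theorem stmt12 {n : ℕ} (H : (∀ _ : Fin n, AddCommGrpCat.{0}) ⥤ AddCommGrpCat.{0})
    (hadd : ∀ (X : Fin n → AddCommGrpCat.{0}) (i : Fin n) (A B : AddCommGrpCat.{0}),
      Function.Bijective (fun x : H.obj (upd X i (AddCommGrpCat.of (A × B))) =>
        (H.map (updProj₁ X i A B) x, H.map (updProj₂ X i A B) x)))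
    (σact : ∀ σ : Equiv.Perm (Fin n), H ⟶ reindexF σ ⋙ H)
    (σact_mul : ∀ (σ τ : Equiv.Perm (Fin n)) (A : ∀ _ : Fin n, AddCommGrpCat.{0}),
      (σact (σ * τ)).app A = (σact σ).app A ≫ (σact τ).app ((reindexF σ).obj A))
    (X : AddCommGrpCat.{0}) :
    (∀ a : Equiv.Perm (Fin n) → H.obj (fun _ : Fin n => X),
      (∑ σ : Equiv.Perm (Fin n), H.map (inclMor X σ) (a σ)) ∈ perpN H X) ∧
    Function.Injective
      (fun a : Equiv.Perm (Fin n) → H.obj (fun _ : Fin n => X) =>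
        ∑ σ : Equiv.Perm (Fin n), H.map (inclMor X σ) (a σ)) ∧
    Set.range
      (fun a : Equiv.Perm (Fin n) → H.obj (fun _ : Fin n => X) =>
        ∑ σ : Equiv.Perm (Fin n), H.map (inclMor X σ) (a σ)) = ↑(perpN H X) ∧
    (∀ a : Equiv.Perm (Fin n) → H.obj (fun _ : Fin n => X),
      H.map (foldMor X) (∑ σ : Equiv.Perm (Fin n), H.map (inclMor X σ) (a σ)) =
        ∑ σ : Equiv.Perm (Fin n), a σ) := by

  classical
  refine ⟨?_, ?_, ?_, ?_⟩
  · intro a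
    exact AddSubgroup.sum_mem _ (fun σ _ => Stmt12Aux.memPerp H X hadd (a σ) σ)
  · intro a b hab
    funext τ
    have h := congrArg (H.map (Stmt12Aux.Pc X ⇑τ)) hab
    rwa [Stmt12Aux.keyProj H X hadd a τ, Stmt12Aux.keyProj H X hadd b τ] at h
  · ext x
    simp only [Set.mem_range, SetLike.mem_coe]
    constructor
    · rintro ⟨a, rfl⟩
      exact AddSubgroup.sum_mem _ (fun σ _ => Stmt12Aux.memPerp H X hadd (a σ) σ)
    · intro hx
      exact ⟨fun σ => H.map (Stmt12Aux.Pc X ⇑σ) x, (Stmt12Aux.decompPerp H X hadd x hx).symm⟩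
  · intro a
    rw [map_sum]
    refine Finset.sum_congr rfl fun σ _ => ?_
    rw [← Stmt12Aux.mapc H (inclMor X σ) (foldMor X) (a σ), Stmt12Aux.foldIncl X σ, H.map_id]
    rfl
end

section
/- Let ε : ⊥₂F(X) → F(X) denote, for a functor F from pointed types to groups, the restriction of F(fold) to cr₂F(X,X) = ker(F(X ∨ X) → F(X) × F(X)). Define F'(X) = image(ε) (a normal subgroup of F(X)) and F^{ab}(X) = F(X)/F'(X). Then the functor F^{ab} (from pointed types to groups) satisfies ⊥₂F^{ab}(X) = cr₂F^{ab}(X,X) = trivial group for every pointed type X. Equivalently, the canonical map F^{ab}(X ∨ X) → F^{ab}(X) × F^{ab}(X) is injective. -/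
open CategoryTheory

universe u

/-- The wedge `X ∨ Y` of two pointed types. -/
def Wedge2 (X Y : Pointed.{u}) : Pointed.{u} where
  X := {p : X.X × Y.X // p.1 = X.point ∨ p.2 = Y.point}
  point := ⟨(X.point, Y.point), Or.inl rfl⟩

/-- The collapse map `X ∨ Y → X`. -/
def wedgeProj₁ (X Y : Pointed.{u}) : Wedge2 X Y ⟶ X where
  toFun p := p.1.1
  map_point := rfl

/-- The collapse map `X ∨ Y → Y`. -/
def wedgeProj₂ (X Y : Pointed.{u}) : Wedge2 X Y ⟶ Y where
  toFun p := p.1.2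
  map_point := rfl

/-- The fold map `X ∨ X → X`, restricting to the identity on each copy of `X`. -/
noncomputable def foldHom2 (X : Pointed.{u}) : Wedge2 X X ⟶ X := by
  classical exact
  { toFun := fun p => if p.1.1 = X.point then p.1.2 else p.1.1
    map_point := by simp [Wedge2] }

/-- The canonical map `F(X ∨ Y) →* F(X) × F(Y)` induced by the collapse maps. -/
def crossMap (F : Pointed.{u} ⥤ GrpCat.{u}) (X Y : Pointed.{u}) :
    F.obj (Wedge2 X Y) →* F.obj X × F.obj Y :=
  MonoidHom.prod (F.map (wedgeProj₁ X Y)).hom (F.map (wedgeProj₂ X Y)).hom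


/-- `F'(W)`: the image of `ε : cr₂F(W,W) → F(W)`, i.e. of the kernel of
`F(W ∨ W) → F(W) × F(W)` under `F(fold)`. -/
noncomputable def Fprime (F : Pointed.{u} ⥤ GrpCat.{u}) (W : Pointed.{u}) :
    Subgroup (F.obj W) :=
  Subgroup.map (F.map (foldHom2 W)).hom (crossMap F W W).ker

/-! ### Auxiliary constructions -/

/-- Inclusion of the first copy `X → X ∨ X`. -/
def wIncl₁ (X : Pointed.{u}) : X ⟶ Wedge2 X X where
  toFun x := ⟨(x, X.point), Or.inr rfl⟩
  map_point := rfl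

/-- Inclusion of the second copy `X → X ∨ X`. -/
def wIncl₂ (X : Pointed.{u}) : X ⟶ Wedge2 X X where
  toFun x := ⟨(X.point, x), Or.inl rfl⟩
  map_point := rfl

/-- Wedge of two pointed maps: `X ∨ X → Z ∨ Z`. -/
def wMap {X Z : Pointed.{u}} (f g : X ⟶ Z) : Wedge2 X X ⟶ Wedge2 Z Z where
  toFun p := ⟨(f.toFun p.1.1, g.toFun p.1.2), by
    rcases p.2 with h | h
    · exact Or.inl (by rw [h, f.map_point])
    · exact Or.inr (by rw [h, g.map_point])⟩
  map_point := by
    apply Subtype.ext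
    show (f.toFun X.point, g.toFun X.point) = (Z.point, Z.point)
    rw [f.map_point, g.map_point]

lemma fmap_comp_apply (F : Pointed.{u} ⥤ GrpCat.{u}) {A B C : Pointed.{u}}
    (f : A ⟶ B) (g : B ⟶ C) (x : F.obj A) :
    F.map (f ≫ g) x = F.map g (F.map f x) := by
  rw [F.map_comp]; rfl

lemma wIncl₁_fold (X : Pointed.{u}) : wIncl₁ X ≫ foldHom2 X = 𝟙 X := by
  classical
  apply Pointed.Hom.ext
  funext x
  show (if x = X.point then X.point else x) = x
  by_cases h : x = X.point
  · rw [if_pos h, h]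
  · rw [if_neg h]

lemma wIncl₂_fold (X : Pointed.{u}) : wIncl₂ X ≫ foldHom2 X = 𝟙 X := by
  classical
  apply Pointed.Hom.ext
  funext x
  show (if X.point = X.point then x else X.point) = x
  rw [if_pos rfl]

lemma wIncl₁_proj₁ (X : Pointed.{u}) : wIncl₁ X ≫ wedgeProj₁ X X = 𝟙 X := rfl

lemma wIncl₂_proj₂ (X : Pointed.{u}) : wIncl₂ X ≫ wedgeProj₂ X X = 𝟙 X := rfl

lemma wMap_proj₁ {X Z : Pointed.{u}} (f g : X ⟶ Z) :
    wMap f g ≫ wedgeProj₁ Z Z = wedgeProj₁ X X ≫ f := rfl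

lemma wMap_proj₂ {X Z : Pointed.{u}} (f g : X ⟶ Z) :
    wMap f g ≫ wedgeProj₂ Z Z = wedgeProj₂ X X ≫ g := rfl

lemma wIncl₁_eq_point {X : Pointed.{u}} {x : X.X} :
    (wIncl₁ X).toFun x = (Wedge2 X X).point ↔ x = X.point := by
  constructor
  · intro h; exact congrArg (fun q => q.1.1) h
  · intro h; subst h; rfl

lemma wIncl₂_eq_point {X : Pointed.{u}} {x : X.X} :
    (wIncl₂ X).toFun x = (Wedge2 X X).point ↔ x = X.point := by
  constructor
  · intro h; exact congrArg (fun q => q.1.2) h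
  · intro h; subst h; rfl

lemma wMap₁₁_fold (X : Pointed.{u}) :
    wMap (wIncl₁ X) (wIncl₁ X) ≫ foldHom2 (Wedge2 X X) = foldHom2 X ≫ wIncl₁ X := by
  classical
  apply Pointed.Hom.ext
  funext p
  show (if (wIncl₁ X).toFun p.1.1 = (Wedge2 X X).point then (wIncl₁ X).toFun p.1.2
      else (wIncl₁ X).toFun p.1.1)
    = (wIncl₁ X).toFun (if p.1.1 = X.point then p.1.2 else p.1.1)
  by_cases h : p.1.1 = X.point
  · rw [if_pos (wIncl₁_eq_point.mpr h), if_pos h]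
  · rw [if_neg (fun hc => h (wIncl₁_eq_point.mp hc)), if_neg h]

lemma wMap₂₂_fold (X : Pointed.{u}) :
    wMap (wIncl₂ X) (wIncl₂ X) ≫ foldHom2 (Wedge2 X X) = foldHom2 X ≫ wIncl₂ X := by
  classical
  apply Pointed.Hom.ext
  funext p
  show (if (wIncl₂ X).toFun p.1.1 = (Wedge2 X X).point then (wIncl₂ X).toFun p.1.2
      else (wIncl₂ X).toFun p.1.1)
    = (wIncl₂ X).toFun (if p.1.1 = X.point then p.1.2 else p.1.1)
  by_cases h : p.1.1 = X.point
  · rw [if_pos (wIncl₂_eq_point.mpr h), if_pos h]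
  · rw [if_neg (fun hc => h (wIncl₂_eq_point.mp hc)), if_neg h]

lemma wMap₁₂_fold (X : Pointed.{u}) :
    wMap (wIncl₁ X) (wIncl₂ X) ≫ foldHom2 (Wedge2 X X) = 𝟙 (Wedge2 X X) := by
  classical
  apply Pointed.Hom.ext
  funext p
  obtain ⟨⟨x, y⟩, hp⟩ := p
  show (if (wIncl₁ X).toFun x = (Wedge2 X X).point then (wIncl₂ X).toFun y
      else (wIncl₁ X).toFun x) = ⟨(x, y), hp⟩
  by_cases h : x = X.point
  · rw [if_pos (wIncl₁_eq_point.mpr h)]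
    exact Subtype.ext (show ((X.point, y) : X.X × X.X) = (x, y) from by rw [h])
  · rw [if_neg (fun hc => h (wIncl₁_eq_point.mp hc))]
    have h' : y = X.point := hp.resolve_left h
    exact Subtype.ext (show ((x, X.point) : X.X × X.X) = (x, y) from by rw [h'])

lemma fold_incl₂_proj₁ (X : Pointed.{u}) :
    foldHom2 X ≫ (wIncl₂ X ≫ wedgeProj₁ X X)
      = wedgeProj₂ X X ≫ (wIncl₂ X ≫ wedgeProj₁ X X) := rfl

lemma fold_incl₁_proj₂ (X : Pointed.{u}) :
    foldHom2 X ≫ (wIncl₁ X ≫ wedgeProj₂ X X)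
      = wedgeProj₁ X X ≫ (wIncl₁ X ≫ wedgeProj₂ X X) := rfl

/-- With `F^{ab}(W) = F(W)/F'(W)`, the second cross effect of
`F^{ab}` vanishes on the diagonal: the canonical map
`F^{ab}(X ∨ X) → F^{ab}(X) × F^{ab}(X)` is injective.  Equivalently (as stated
here), any `g : F(X ∨ X)` whose two collapse images lie in `F'(X)` already lies
in `F'(X ∨ X)`. -/
theorem stmt14 (F : Pointed.{u} ⥤ GrpCat.{u}) (X : Pointed.{u})
    (g : F.obj (Wedge2 X X))
    (h1 : F.map (wedgeProj₁ X X) g ∈ Fprime F X)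
    (h2 : F.map (wedgeProj₂ X X) g ∈ Fprime F X) :
    g ∈ Fprime F (Wedge2 X X) := by
  classical
  simp only [Fprime, Subgroup.mem_map, MonoidHom.mem_ker, crossMap,
    MonoidHom.prod_apply, Prod.mk_eq_one] at h1 h2 ⊢
  obtain ⟨u, ⟨hu1, hu2⟩, hua⟩ := h1
  obtain ⟨v, ⟨hv1, hv2⟩, hvb⟩ := h2
  set a : F.obj X := F.map (wedgeProj₁ X X) g with ha
  set b : F.obj X := F.map (wedgeProj₂ X X) g with hb
  -- basic composite computations
  have comp₁ : ∀ x : F.obj X, F.map (wedgeProj₁ X X) (F.map (wIncl₁ X) x) = x := by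
    intro x
    rw [← fmap_comp_apply, wIncl₁_proj₁, F.map_id]; rfl
  have comp₂ : ∀ x : F.obj X, F.map (wedgeProj₂ X X) (F.map (wIncl₂ X) x) = x := by
    intro x
    rw [← fmap_comp_apply, wIncl₂_proj₂, F.map_id]; rfl
  -- the "constant" compositions kill a and b
  have const₁ : F.map (wedgeProj₁ X X) (F.map (wIncl₂ X) b) = 1 := by
    rw [← hvb, ← fmap_comp_apply, ← fmap_comp_apply]
    try simp only [Category.assoc]
    rw [fold_incl₂_proj₁ X, fmap_comp_apply, hv2, map_one]
  have const₂ : F.map (wedgeProj₂ X X) (F.map (wIncl₁ X) a) = 1 := by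
    rw [← hua, ← fmap_comp_apply, ← fmap_comp_apply]
    try simp only [Category.assoc]
    rw [fold_incl₁_proj₂ X, fmap_comp_apply, hu1, map_one]
  -- membership of F(i₁)(a)
  have m1 : ∃ k, ((F.map (wedgeProj₁ (Wedge2 X X) (Wedge2 X X)) k = 1
      ∧ F.map (wedgeProj₂ (Wedge2 X X) (Wedge2 X X)) k = 1))
      ∧ F.map (foldHom2 (Wedge2 X X)) k = F.map (wIncl₁ X) a := by
    refine ⟨F.map (wMap (wIncl₁ X) (wIncl₁ X)) u, ⟨?_, ?_⟩, ?_⟩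
    · rw [← fmap_comp_apply, wMap_proj₁, fmap_comp_apply, hu1, map_one]
    · rw [← fmap_comp_apply, wMap_proj₂, fmap_comp_apply, hu2, map_one]
    · rw [← fmap_comp_apply, wMap₁₁_fold, fmap_comp_apply, hua]
  have m2 : ∃ k, ((F.map (wedgeProj₁ (Wedge2 X X) (Wedge2 X X)) k = 1
      ∧ F.map (wedgeProj₂ (Wedge2 X X) (Wedge2 X X)) k = 1))
      ∧ F.map (foldHom2 (Wedge2 X X)) k = F.map (wIncl₂ X) b := by
    refine ⟨F.map (wMap (wIncl₂ X) (wIncl₂ X)) v, ⟨?_, ?_⟩, ?_⟩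
    · rw [← fmap_comp_apply, wMap_proj₁, fmap_comp_apply, hv1, map_one]
    · rw [← fmap_comp_apply, wMap_proj₂, fmap_comp_apply, hv2, map_one]
    · rw [← fmap_comp_apply, wMap₂₂_fold, fmap_comp_apply, hvb]
  -- the reduced element
  set gt : F.obj (Wedge2 X X) :=
    g * (F.map (wIncl₂ X) b)⁻¹ * (F.map (wIncl₁ X) a)⁻¹ with hgt
  have hp1 : F.map (wedgeProj₁ X X) gt = 1 := by
    rw [hgt, map_mul, map_mul, map_inv, map_inv, const₁, comp₁, ← ha]
    group
  have hp2 : F.map (wedgeProj₂ X X) gt = 1 := by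
    rw [hgt, map_mul, map_mul, map_inv, map_inv, const₂, comp₂, ← hb]
    group
  have m0 : ∃ k, ((F.map (wedgeProj₁ (Wedge2 X X) (Wedge2 X X)) k = 1
      ∧ F.map (wedgeProj₂ (Wedge2 X X) (Wedge2 X X)) k = 1))
      ∧ F.map (foldHom2 (Wedge2 X X)) k = gt := by
    refine ⟨F.map (wMap (wIncl₁ X) (wIncl₂ X)) gt, ⟨?_, ?_⟩, ?_⟩
    · rw [← fmap_comp_apply, wMap_proj₁, fmap_comp_apply, hp1, map_one]
    · rw [← fmap_comp_apply, wMap_proj₂, fmap_comp_apply, hp2, map_one]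
    · rw [← fmap_comp_apply, wMap₁₂_fold, F.map_id]; rfl
  -- assemble
  obtain ⟨k0, hk0, hk0f⟩ := m0
  obtain ⟨k1, hk1, hk1f⟩ := m1
  obtain ⟨k2, hk2, hk2f⟩ := m2
  refine ⟨k0 * k1 * k2, ⟨?_, ?_⟩, ?_⟩
  · rw [map_mul, map_mul, hk0.1, hk1.1, hk2.1, mul_one, mul_one]
  · rw [map_mul, map_mul, hk0.2, hk1.2, hk2.2, mul_one, mul_one]
  · rw [map_mul, map_mul, hk0f, hk1f, hk2f, hgt]
    group
end
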